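/- Let L be an algebraically closed field containing 𝔽_q, let R = L[[π]] be the power series ring, and let F: R → R be the ring endomorphism raising each coefficient of a power series to the q-th power. Then the map X ↦ F(X)^{-1}·X from GLₙ(R) to GLₙ(R) is surjective, assuming Lang's theorem for GLₙ(L) and solvability of Artin–Schreier equations x^q − x = a over L. -/

import Mathlib

open PowerSeries Finset

private noncomputable def zCoeff {S : Type*} [Ring S] (f sol : S → S) (b : ℕ → S) : ℕ → S
  | 0 => 1
  | (m + 1) => sol (∑ i ∈ (Finset.range (m + 1)).attach,
      f (zCoeff f sol b i.1) * b (m + 1 - i.1))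
  decreasing_by exact Finset.mem_range.mp i.2

private theorem coeffM_mul {L : Type*} [Field L] {n : ℕ}
    (P Q : Matrix (Fin n) (Fin n) (PowerSeries L)) (m : ℕ) :
    (P * Q).map (PowerSeries.coeff m) =
      ∑ pr ∈ Finset.HasAntidiagonal.antidiagonal m, P.map (PowerSeries.coeff pr.1) * Q.map (PowerSeries.coeff pr.2) := by
  ext i j
  simp only [Matrix.map_apply, Matrix.mul_apply, map_sum, PowerSeries.coeff_mul,
    Matrix.sum_apply]
  exact Finset.sum_comm

/-- Lang's theorem for `GLₙ` over the power series ring `L[[π]]`: if `φ` is the `q`-power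
Frobenius of an algebraically closed field `L` containing `𝔽_q`, acting coefficientwise on
`L[[π]]`, then — assuming Lang's theorem for `GLₙ(L)` and the solvability of Artin–Schreier
equations over `L` — the map `X ↦ F(X)⁻¹ · X` on `GLₙ(L[[π]])` is surjective. -/
theorem lang_GL_powerSeries_surjective {L : Type*} [Field L] [IsAlgClosed L]
    (p k q : ℕ) (hp : p.Prime) [CharP L p] (hk : 0 < k) (hq : q = p ^ k)
    (φ : L →+* L) (hφ : ∀ x : L, φ x = x ^ q) (n : ℕ)
    (hLang : ∀ A : (Matrix (Fin n) (Fin n) L)ˣ, ∃ X : (Matrix (Fin n) (Fin n) L)ˣ,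
      A = (Units.map (RingHom.mapMatrix (m := Fin n) φ).toMonoidHom X)⁻¹ * X)
    (hAS : ∀ a : L, ∃ x : L, x ^ q - x = a) :
    ∀ A : (Matrix (Fin n) (Fin n) (PowerSeries L))ˣ,
      ∃ X : (Matrix (Fin n) (Fin n) (PowerSeries L))ˣ,
        A = (Units.map (RingHom.mapMatrix (m := Fin n) (PowerSeries.map φ)).toMonoidHom X)⁻¹ * X := by
  classical
  intro A
  set Fm : Matrix (Fin n) (Fin n) (PowerSeries L) →+* Matrix (Fin n) (Fin n) (PowerSeries L) :=
    RingHom.mapMatrix (m := Fin n) (PowerSeries.map φ) with hFmdef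
  set cc : Matrix (Fin n) (Fin n) (PowerSeries L) →+* Matrix (Fin n) (Fin n) L :=
    RingHom.mapMatrix (m := Fin n) (PowerSeries.constantCoeff) with hccdef
  set Cm : Matrix (Fin n) (Fin n) L →+* Matrix (Fin n) (Fin n) (PowerSeries L) :=
    RingHom.mapMatrix (m := Fin n) (PowerSeries.C) with hCmdef
  obtain ⟨X₀, hX₀⟩ := hLang (Units.map cc.toMonoidHom A)
  -- Artin–Schreier solver for matrices
  have hAS' : ∀ c : Matrix (Fin n) (Fin n) L, ∃ z : Matrix (Fin n) (Fin n) L,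
      z - z.map φ = c := by
    intro c
    refine ⟨Matrix.of fun i j => Classical.choose (hAS (-(c i j))), ?_⟩
    ext i j
    have h := Classical.choose_spec (hAS (-(c i j)))
    simp only [Matrix.sub_apply, Matrix.map_apply, Matrix.of_apply, hφ]
    rw [← neg_sub, h, neg_neg]
  choose sol hsol using hAS'
  set φM : Matrix (Fin n) (Fin n) L → Matrix (Fin n) (Fin n) L := fun P => P.map φ with hφM
  set Bval : Matrix (Fin n) (Fin n) (PowerSeries L) :=
    Fm (Cm X₀.val) * A.val * Cm (X₀⁻¹).val with hBval
  set b : ℕ → Matrix (Fin n) (Fin n) L := fun m => Bval.map (PowerSeries.coeff m) with hb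
  -- coeff-0 map is cc
  have hcc0 : ∀ P : Matrix (Fin n) (Fin n) (PowerSeries L),
      P.map (PowerSeries.coeff 0) = cc P := by
    intro P; ext i j
    simp [hccdef, RingHom.mapMatrix_apply, Matrix.map_apply, PowerSeries.coeff_zero_eq_constantCoeff]
  -- b 0 = 1
  have hunit : (Units.map (RingHom.mapMatrix (m := Fin n) φ).toMonoidHom X₀) *
      Units.map cc.toMonoidHom A * X₀⁻¹ = 1 := by
    rw [hX₀]; group
  have hvals : (RingHom.mapMatrix (m := Fin n) φ) X₀.val * cc A.val * (X₀⁻¹).val = 1 := by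
    have := congrArg Units.val hunit
    simpa [Units.coe_map] using this
  have hccFmCm : ∀ P : Matrix (Fin n) (Fin n) L, cc (Fm (Cm P)) = P.map φ := by
    intro P; ext i j
    simp [hccdef, hFmdef, hCmdef, RingHom.mapMatrix_apply, Matrix.map_apply, PowerSeries.map_C]
  have hccCm : ∀ P : Matrix (Fin n) (Fin n) L, cc (Cm P) = P := by
    intro P; ext i j
    simp [hccdef, hCmdef, RingHom.mapMatrix_apply, Matrix.map_apply]
  have hb0 : b 0 = 1 := by
    rw [hb]
    simp only [hcc0, hBval, map_mul, hccFmCm, hccCm]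
    have : X₀.val.map φ = (RingHom.mapMatrix (m := Fin n) φ) X₀.val := rfl
    rw [this]
    exact hvals
  -- the coefficients of Z
  set Zc : ℕ → Matrix (Fin n) (Fin n) L := zCoeff φM sol b with hZc
  set Zval : Matrix (Fin n) (Fin n) (PowerSeries L) :=
    Matrix.of fun i j => PowerSeries.mk fun m => Zc m i j with hZval
  have hZcoeff : ∀ m, Zval.map (PowerSeries.coeff m) = Zc m := by
    intro m; ext i j
    simp [hZval, Matrix.map_apply, PowerSeries.coeff_mk]
  have hZc0 : Zc 0 = 1 := by rw [hZc, zCoeff]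
  have hφM1 : φM (1 : Matrix (Fin n) (Fin n) L) = 1 := by
    rw [hφM]; exact Matrix.map_one φ (map_zero φ) (map_one φ)
  -- the recurrence
  have hrec : ∀ m, ∑ pr ∈ Finset.HasAntidiagonal.antidiagonal m, φM (Zc pr.1) * b pr.2 = Zc m := by
    intro m
    cases m with
    | zero =>
      simp [hZc0, hφM1, hb0]
    | succ m =>
      rw [Finset.Nat.sum_antidiagonal_eq_sum_range_succ_mk, Finset.sum_range_succ]
      have hdef : Zc (m + 1) = sol (∑ i ∈ Finset.range (m + 1), φM (Zc i) * b (m + 1 - i)) := by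
        rw [hZc, zCoeff]
        exact congrArg sol (Finset.sum_attach _ fun i => φM (zCoeff φM sol b i) * b (m + 1 - i))
      rw [Nat.sub_self, hb0, mul_one, hdef]
      set C := ∑ i ∈ Finset.range (m + 1), φM (Zc i) * b (m + 1 - i) with hC
      have h := hsol C
      show C + φM (sol C) = sol C
      have h2 : φM (sol C) = (sol C).map φ := rfl
      rw [h2]
      exact (sub_eq_iff_eq_add.mp h).symm
  -- main identity
  have hmain : Fm Zval * Bval = Zval := by
    have key : ∀ m, (Fm Zval * Bval).map (PowerSeries.coeff m) = Zval.map (PowerSeries.coeff m) := by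
      intro m
      rw [coeffM_mul]
      have h1 : ∀ kk, (Fm Zval).map (PowerSeries.coeff kk) = φM (Zc kk) := by
        intro kk; ext i j
        simp [hFmdef, RingHom.mapMatrix_apply, Matrix.map_apply, PowerSeries.coeff_map,
          hZval, PowerSeries.coeff_mk, hφM]
      calc ∑ pr ∈ Finset.HasAntidiagonal.antidiagonal m,
            (Fm Zval).map (PowerSeries.coeff pr.1) * Bval.map (PowerSeries.coeff pr.2)
          = ∑ pr ∈ Finset.HasAntidiagonal.antidiagonal m, φM (Zc pr.1) * b pr.2 := by
            refine Finset.sum_congr rfl fun pr _ => ?_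
            rw [h1]
        _ = Zc m := hrec m
        _ = Zval.map (PowerSeries.coeff m) := (hZcoeff m).symm
    ext i j m
    have := congrFun (congrFun (key m) i) j
    simpa [Matrix.map_apply] using this
  -- Z is a unit
  have hZunit : IsUnit Zval := by
    rw [Matrix.isUnit_iff_isUnit_det]
    rw [PowerSeries.isUnit_iff_constantCoeff]
    have h1 : PowerSeries.constantCoeff Zval.det = (Zval.map (PowerSeries.constantCoeff)).det :=
      RingHom.map_det _ _
    have h2 : Zval.map (PowerSeries.constantCoeff) = 1 := by
      have := hZcoeff 0
      rw [hZc0] at this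
      rw [← this]
      ext i j
      simp [Matrix.map_apply, PowerSeries.coeff_zero_eq_constantCoeff]
    rw [h1, h2]
    simp
  -- assemble
  set Xval : Matrix (Fin n) (Fin n) (PowerSeries L) := Zval * Cm X₀.val with hXval
  have hXunit : IsUnit Xval := hZunit.mul ((Units.map Cm.toMonoidHom X₀).isUnit)
  refine ⟨hXunit.unit, ?_⟩
  rw [eq_inv_mul_iff_mul_eq]
  apply Units.ext
  have hcv : (hXunit.unit : Matrix (Fin n) (Fin n) (PowerSeries L)) = Xval := hXunit.unit_spec
  show (Fm Xval) * A.val = Xval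
  have hBX : Bval * Cm X₀.val = Fm (Cm X₀.val) * A.val := by
    have h1 : Cm (X₀⁻¹).val * Cm X₀.val = 1 := by
      rw [← map_mul, X₀.inv_mul, map_one]
    calc Bval * Cm X₀.val
        = Fm (Cm X₀.val) * A.val * (Cm (X₀⁻¹).val * Cm X₀.val) := by rw [hBval, mul_assoc]
      _ = Fm (Cm X₀.val) * A.val := by rw [h1, mul_one]
  calc Fm Xval * A.val = Fm Zval * Fm (Cm X₀.val) * A.val := by rw [hXval, map_mul]
    _ = Fm Zval * (Bval * Cm X₀.val) := by rw [hBX, mul_assoc]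
    _ = Zval * Cm X₀.val := by rw [← mul_assoc, hmain]
    _ = Xval := hXval.symm
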